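/- Let A = U·S·Vᴴ be the SVD of an n₁ × n₂ matrix and let G be an n₂ × ℓ matrix. If rank(A) = r ≤ ℓ and the r × ℓ matrix V_rᴴ·G has rank r (where V_r consists of the first r columns of V), then the column space of Y = A·G equals the column space of A; consequently, if Q is any matrix whose orthonormal columns span the column space of Y, then Q·Qᴴ·A = A. -/
import Mathlib


open Matrix BigOperators

lemma range_comp_surj {α β γ : Type*} [Fintype α] [Fintype β] [Fintype γ]
    [DecidableEq α] [DecidableEq β]
    (M : Matrix γ β ℂ) (N : Matrix β α ℂ)
    (hN : LinearMap.range (Matrix.mulVecLin N) = ⊤) :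
    LinearMap.range (Matrix.mulVecLin (M * N)) = LinearMap.range (Matrix.mulVecLin M) := by
  rw [Matrix.mulVecLin_mul, LinearMap.range_comp, hN, Submodule.map_top]

/-- Exactness of the randomized range finder: if `rank A = r ≤ ℓ` and the sketch
`Vᵣᴴ·G` has full rank `r`, then the column space of `A·G` equals that of `A`, and any
orthonormal basis matrix `Q` of that space satisfies `Q·Qᴴ·A = A`. -/
theorem range_finder_exact (n₁ n₂ ℓ r : ℕ) (A : Matrix (Fin n₁) (Fin n₂) ℂ)
    (G : Matrix (Fin n₂) (Fin ℓ) ℂ)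
    (U : Matrix (Fin n₁) (Fin n₁) ℂ) (V : Matrix (Fin n₂) (Fin n₂) ℂ)
    (σ : Fin (min n₁ n₂) → ℝ)
    (hU : Uᴴ * U = 1) (hV : Vᴴ * V = 1) (hVV : V * Vᴴ = 1)
    (hA : A = ∑ i : Fin (min n₁ n₂), (σ i : ℂ) •
        Matrix.vecMulVec (fun a => U a (Fin.castLE (min_le_left n₁ n₂) i))
          (fun b => star (V b (Fin.castLE (min_le_right n₁ n₂) i))))
    (hrm : r ≤ min n₁ n₂)
    (hσ : ∀ i : Fin (min n₁ n₂), σ i ≠ 0 ↔ (i : ℕ) < r)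
    (hrank : A.rank = r) (hrl : r ≤ ℓ)
    (Vr : Matrix (Fin n₂) (Fin r) ℂ)
    (hVr : Vr = Matrix.of fun i j =>
      V i (Fin.castLE (le_trans hrm (min_le_right n₁ n₂)) j))
    (hG : (Vrᴴ * G).rank = r) :
    LinearMap.range (Matrix.mulVecLin (A * G)) = LinearMap.range (Matrix.mulVecLin A) ∧
    ∀ (ℓ' : ℕ) (Q : Matrix (Fin n₁) (Fin ℓ') ℂ), Qᴴ * Q = 1 →
      LinearMap.range (Matrix.mulVecLin Q)
        = LinearMap.range (Matrix.mulVecLin (A * G)) →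
      Q * Qᴴ * A = A := by
  -- reduced factors
  set Ur : Matrix (Fin n₁) (Fin r) ℂ :=
    Matrix.of fun a j => U a (Fin.castLE (le_trans hrm (min_le_left n₁ n₂)) j) with hUr
  set D : Matrix (Fin r) (Fin r) ℂ :=
    Matrix.diagonal (fun j : Fin r => (σ (Fin.castLE hrm j) : ℂ)) with hD
  -- factorization A = (Ur * D) * Vrᴴ
  have hfac : A = (Ur * D) * Vrᴴ := by
    ext a b
    rw [hA, Matrix.sum_apply]
    have hsub : ∀ i ∈ (Finset.univ : Finset (Fin (min n₁ n₂))),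
        i ∉ (Finset.univ : Finset (Fin r)).map (Fin.castLEEmb hrm) →
        ((σ i : ℂ) • Matrix.vecMulVec (fun a => U a (Fin.castLE (min_le_left n₁ n₂) i))
          (fun b => star (V b (Fin.castLE (min_le_right n₁ n₂) i)))) a b = 0 := by
      intro i _ hi
      have hσi : σ i = 0 := by
        by_contra h
        apply hi
        simp only [Finset.mem_map, Finset.mem_univ, true_and]
        exact ⟨⟨(i : ℕ), (hσ i).mp h⟩, Fin.ext rfl⟩
      simp [hσi]
    rw [← Finset.sum_subset (Finset.subset_univ _) hsub, Finset.sum_map]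
    have e1 : ∀ j : Fin r, Fin.castLE (min_le_left n₁ n₂) (Fin.castLE hrm j)
        = Fin.castLE (le_trans hrm (min_le_left n₁ n₂)) j := fun j => rfl
    have e2 : ∀ j : Fin r, Fin.castLE (min_le_right n₁ n₂) (Fin.castLE hrm j)
        = Fin.castLE (le_trans hrm (min_le_right n₁ n₂)) j := fun j => rfl
    simp only [hD, Matrix.mul_diagonal, Matrix.mul_apply, hUr, hVr, Matrix.of_apply,
      Matrix.conjTranspose_apply, Matrix.smul_apply, Matrix.vecMulVec_apply,
      smul_eq_mul, Function.Embedding.coeFn_mk, RelEmbedding.coe_toEmbedding,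
      Fin.castLEEmb_apply, e1, e2, Matrix.diagonal_apply, mul_ite, mul_zero, ite_mul, zero_mul, Finset.sum_ite_eq, Finset.sum_ite_eq', Finset.mem_univ, if_true]
    exact Finset.sum_congr rfl fun j _ => by ring
  -- Vrᴴ * Vr = 1
  have hVrV : Vrᴴ * Vr = 1 := by
    ext i j
    have := congrFun (congrFun hV (Fin.castLE (le_trans hrm (min_le_right n₁ n₂)) i))
      (Fin.castLE (le_trans hrm (min_le_right n₁ n₂)) j)
    simp only [Matrix.mul_apply, Matrix.conjTranspose_apply, hVr, Matrix.of_apply] at this ⊢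
    rw [this]
    simp [Matrix.one_apply, (Fin.castLE_injective _).eq_iff]
  -- Vrᴴ surjective
  have hVrsurj : LinearMap.range (Matrix.mulVecLin Vrᴴ) = ⊤ := by
    rw [LinearMap.range_eq_top]
    intro y
    refine ⟨Vr.mulVec y, ?_⟩
    simp [Matrix.mulVec_mulVec, hVrV]
  -- Vrᴴ * G surjective
  have hGsurj : LinearMap.range (Matrix.mulVecLin (Vrᴴ * G)) = ⊤ := by
    apply Submodule.eq_top_of_finrank_eq
    rw [← Matrix.rank, hG]
    simp
  have h1 : LinearMap.range (Matrix.mulVecLin (A * G))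
      = LinearMap.range (Matrix.mulVecLin (Ur * D)) := by
    rw [hfac, Matrix.mul_assoc]
    exact range_comp_surj _ _ hGsurj
  have h2 : LinearMap.range (Matrix.mulVecLin A)
      = LinearMap.range (Matrix.mulVecLin (Ur * D)) := by
    rw [hfac]
    exact range_comp_surj _ _ hVrsurj
  refine ⟨h1.trans h2.symm, ?_⟩
  intro ℓ' Q hQ hrange
  have hrQ : LinearMap.range (Matrix.mulVecLin Q) = LinearMap.range (Matrix.mulVecLin A) :=
    hrange.trans (h1.trans h2.symm)
  have hcol : ∀ v : Fin n₂ → ℂ, (Q * Qᴴ * A).mulVec v = A.mulVec v := by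
    intro v
    have : A.mulVec v ∈ LinearMap.range (Matrix.mulVecLin Q) := by
      rw [hrQ]; exact ⟨v, rfl⟩
    obtain ⟨c, hc⟩ := this
    simp only [Matrix.mulVecLin_apply] at hc
    calc (Q * Qᴴ * A).mulVec v = (Q * Qᴴ).mulVec (A.mulVec v) := by
          rw [Matrix.mulVec_mulVec]
      _ = (Q * Qᴴ).mulVec (Q.mulVec c) := by rw [hc]
      _ = Q.mulVec ((Qᴴ * Q).mulVec c) := by
          rw [Matrix.mulVec_mulVec, Matrix.mulVec_mulVec, Matrix.mul_assoc]
      _ = Q.mulVec c := by rw [hQ, Matrix.one_mulVec]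
      _ = A.mulVec v := hc
  ext i j
  have := congrFun (hcol (Pi.single j 1)) i
  simpa [Matrix.mulVec_single] using this
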